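/- Every continuous multilinear function f : V₁ × ... × V_k → ℝ on finite-dimensional real inner product spaces attains a maximum on the product of unit spheres S^{n₁-1} × ... × S^{n_k-1} (n_i ≥ 1), and every maximizer (v₁,...,v_k) together with σ = f(v₁,...,v_k) is a singular tuple: ∇_i f(v₁,...,v_k) = σ v_i for all i. -/

import Mathlib

open scoped RealInnerProductSpace

private lemma aux_zero (A c : ℝ) (hA : 0 ≤ A) (h : ∀ t : ℝ, t * c ≤ A * t ^ 2) : c = 0 := by
  by_contra hc
  have hA1 : (0:ℝ) < A + 1 := by linarith
  set t₀ := c / (A + 1) with ht₀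
  have hct : c = t₀ * (A + 1) := by rw [ht₀, div_mul_cancel₀ _ hA1.ne']
  have ht0 : t₀ ≠ 0 := div_ne_zero hc hA1.ne'
  have ht2 : 0 < t₀ ^ 2 := by positivity
  have key : t₀ * c = t₀ ^ 2 * (A + 1) := by rw [hct]; ring
  nlinarith [h t₀, key, ht2]

/-- Every continuous multilinear function `f : V₁ × ⋯ × V_k → ℝ` on finite-dimensional
real inner product spaces attains a maximum on the product of unit spheres (`n_i ≥ 1`),
and every maximizer `(v₁,…,v_k)` together with `σ = f(v₁,…,v_k)` is a singular tuple:
`∇_i f(v₁,…,v_k) = σ v_i` for all `i`, where `∇_i f(v₁,…,v_k)` is the vector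
representing the linear functional `u ↦ f(v₁,…,u,…,v_k)`. -/
theorem exists_max_singular_tuple {k : ℕ} {n : Fin k → ℕ} (hn : ∀ i, 1 ≤ n i)
    (f : ContinuousMultilinearMap ℝ (fun r : Fin k => EuclideanSpace ℝ (Fin (n r))) ℝ) :
    (∃ v : ∀ r : Fin k, EuclideanSpace ℝ (Fin (n r)), (∀ i, ‖v i‖ = 1) ∧
      ∀ w : ∀ r : Fin k, EuclideanSpace ℝ (Fin (n r)),
        (∀ i, ‖w i‖ = 1) → f w ≤ f v) ∧
    (∀ v : ∀ r : Fin k, EuclideanSpace ℝ (Fin (n r)), (∀ i, ‖v i‖ = 1) →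
      (∀ w : ∀ r : Fin k, EuclideanSpace ℝ (Fin (n r)), (∀ i, ‖w i‖ = 1) → f w ≤ f v) →
      ∀ i, ∀ u : EuclideanSpace ℝ (Fin (n i)),
        f (Function.update v i u) = ⟪f v • v i, u⟫) := by
  classical
  constructor
  · -- existence of maximizer
    have hS : {v : ∀ r : Fin k, EuclideanSpace ℝ (Fin (n r)) | ∀ i, ‖v i‖ = 1}
        = Set.pi Set.univ (fun i => Metric.sphere (0 : EuclideanSpace ℝ (Fin (n i))) 1) := by
      ext v
      simp [Set.mem_pi, mem_sphere_iff_norm]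
    have hcomp : IsCompact {v : ∀ r : Fin k, EuclideanSpace ℝ (Fin (n r)) | ∀ i, ‖v i‖ = 1} := by
      rw [hS]; exact isCompact_univ_pi fun i => isCompact_sphere 0 1
    have hne : ∃ v : ∀ r : Fin k, EuclideanSpace ℝ (Fin (n r)), ∀ i, ‖v i‖ = 1 := by
      refine ⟨fun i => EuclideanSpace.single (⟨0, hn i⟩ : Fin (n i)) (1 : ℝ), fun i => ?_⟩
      rw [EuclideanSpace.norm_single]; norm_num
    obtain ⟨v0, hv0⟩ := hne
    obtain ⟨v, hvS, hvmax⟩ := hcomp.exists_isMaxOn ⟨v0, hv0⟩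
      (f.cont.continuousOn : ContinuousOn f _)
    exact ⟨v, hvS, fun w hw => hvmax hw⟩
  · intro v hv hmax i u
    set σ := f v with hσ
    have hupd : ∀ x : EuclideanSpace ℝ (Fin (n i)), ‖x‖ = 1 →
        ∀ j, ‖Function.update v i x j‖ = 1 := by
      intro x hx j
      rcases eq_or_ne j i with rfl | hji
      · simpa using hx
      · rw [Function.update_of_ne hji]; exact hv j
    have hσ0 : 0 ≤ σ := by
      have h1 := hmax (Function.update v i (-(v i))) (by
        intro j; rcases eq_or_ne j i with rfl | hji
        · simp [hv j]
        · rw [Function.update_of_ne hji]; exact hv j)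
      have h2 : f (Function.update v i (-(v i))) = -σ := by
        rw [show -(v i) = (-1 : ℝ) • v i by simp, f.map_update_smul, Function.update_eq_self]
        simp [hσ]
      rw [h2] at h1; linarith
    -- key: f vanishes in directions orthogonal to v i
    have hkey : ∀ w : EuclideanSpace ℝ (Fin (n i)), ⟪v i, w⟫ = 0 →
        f (Function.update v i w) = 0 := by
      intro w hw
      set c := f (Function.update v i w) with hc
      have hall : ∀ t : ℝ, t * c ≤ (σ * ‖w‖ ^ 2) * t ^ 2 := by
        intro t
        set ut := v i + t • w with hut
        have hinner : ⟪v i, t • w⟫ = 0 := by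
          rw [real_inner_smul_right, hw]; ring
        have hnut : ‖ut‖ ^ 2 = 1 + t ^ 2 * ‖w‖ ^ 2 := by
          rw [hut, norm_add_sq_real, hinner, norm_smul, Real.norm_eq_abs, mul_pow, sq_abs,
            hv i]
          ring
        have hnut1 : 1 ≤ ‖ut‖ := by
          nlinarith [norm_nonneg ut, sq_nonneg (t * ‖w‖)]
        have hpos : 0 < ‖ut‖ := by linarith
        have hz : ‖(‖ut‖⁻¹ • ut : EuclideanSpace ℝ (Fin (n i)))‖ = 1 := by
          rw [norm_smul, norm_inv, norm_norm, inv_mul_cancel₀ hpos.ne']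
        have h1 := hmax (Function.update v i (‖ut‖⁻¹ • ut)) (hupd _ hz)
        have h2 : f (Function.update v i (‖ut‖⁻¹ • ut)) = ‖ut‖⁻¹ * (σ + t * c) := by
          rw [f.map_update_smul, hut, f.map_update_add, f.map_update_smul,
            Function.update_eq_self]
          simp only [smul_eq_mul, ← hσ, ← hc]
        rw [h2] at h1
        have h3 : σ + t * c ≤ ‖ut‖ * σ := (inv_mul_le_iff₀ hpos).mp h1
        have h4 : ‖ut‖ * σ ≤ (1 + t ^ 2 * ‖w‖ ^ 2) * σ := by
          apply mul_le_mul_of_nonneg_right _ hσ0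
          nlinarith
        nlinarith
      exact aux_zero _ _ (by positivity) hall
    -- decompose u
    set w := u - ⟪v i, u⟫ • v i with hwdef
    have hvv : ⟪v i, v i⟫ = 1 := by
      rw [real_inner_self_eq_norm_sq, hv i]; norm_num
    have hworth : ⟪v i, w⟫ = 0 := by
      rw [hwdef, inner_sub_right, real_inner_smul_right, hvv]; ring
    have hdecomp : u = ⟪v i, u⟫ • v i + w := by rw [hwdef]; abel
    calc f (Function.update v i u)
        = f (Function.update v i (⟪v i, u⟫ • v i + w)) := by rw [← hdecomp]
      _ = f (Function.update v i (⟪v i, u⟫ • v i)) + f (Function.update v i w) := by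
          rw [f.map_update_add]
      _ = ⟪v i, u⟫ * σ := by
          rw [hkey w hworth, f.map_update_smul, Function.update_eq_self]
          simp [hσ]
      _ = ⟪σ • v i, u⟫ := by rw [real_inner_smul_left]; ring
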